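/- Let P be an interval ipomset with sparse step decomposition P = P₁ * ⋯ * Pₙ, and let St, Te be defined as the step indices starting and terminating each event (with St(e) = −∞ for sources and Te(e) = +∞ for targets). Then for all events x, y of P: Te(x) < St(y) if and only if x <_P y. -/

import Mathlib

set_option autoImplicit false

/-! ## Ipomsets (pomsets with interfaces) over an alphabet Λ, with events drawn from ℕ -/

structure Ipomset (Λ : Type) : Type where
  E : Finset ℕ
  lt : ℕ → ℕ → Prop
  evord : ℕ → ℕ → Prop
  S : Finset ℕ
  T : Finset ℕ
  lab : ℕ → Λ
  S_sub : S ⊆ E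
  T_sub : T ⊆ E
  lt_dom : ∀ a b, lt a b → a ∈ E ∧ b ∈ E
  evord_dom : ∀ a b, evord a b → a ∈ E ∧ b ∈ E
  lt_irrefl : ∀ e, ¬ lt e e
  lt_trans : ∀ a b c, lt a b → lt b c → lt a c
  evord_irrefl : ∀ e, ¬ evord e e
  evord_asymm : ∀ a b, evord a b → ¬ evord b a
  lt_evord : ∀ a b, lt a b → ¬ evord a b ∧ ¬ evord b a
  total : ∀ e ∈ E, ∀ e' ∈ E, e ≠ e' → lt e e' ∨ lt e' e ∨ evord e e' ∨ evord e' e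
  S_min : ∀ e ∈ S, ∀ e', ¬ lt e' e
  T_max : ∀ e ∈ T, ∀ e', ¬ lt e e'

namespace Ipomset

variable {Λ : Type}

/-- An ipomset is interval if its precedence order admits an interval representation. -/
def Interval (P : Ipomset Λ) : Prop :=
  ∃ f g : ℕ → ℝ, (∀ e ∈ P.E, f e ≤ g e) ∧
    (∀ e₁ ∈ P.E, ∀ e₂ ∈ P.E, (P.lt e₁ e₂ ↔ g e₁ < f e₂))

/-- Discrete: empty precedence order. -/
def Discrete (P : Ipomset Λ) : Prop := ∀ a b, ¬ P.lt a b

/-- A starter is a discrete ipomset all of whose events are targets. -/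
def IsStarter (P : Ipomset Λ) : Prop := P.Discrete ∧ P.T = P.E

/-- A terminator is a discrete ipomset all of whose events are sources. -/
def IsTerminator (P : Ipomset Λ) : Prop := P.Discrete ∧ P.S = P.E

/-- An identity is both a starter and a terminator. -/
def IsId (P : Ipomset Λ) : Prop := P.IsStarter ∧ P.IsTerminator

/-- The width of an ipomset: the cardinality of a largest `<`-antichain. -/
noncomputable def width (P : Ipomset Λ) : ℕ :=
  sSup {n | ∃ A : Finset ℕ, A ⊆ P.E ∧ (∀ a ∈ A, ∀ b ∈ A, ¬ P.lt a b) ∧ A.card = n}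

/-- `P.Subsumes Q` means `P ⊑ Q` : `Q` subsumes `P`. -/
def Subsumes (P Q : Ipomset Λ) : Prop :=
  ∃ f : ℕ → ℕ, Set.BijOn f ↑P.E ↑Q.E ∧
    (∀ e ∈ P.E, (e ∈ P.S ↔ f e ∈ Q.S)) ∧
    (∀ e ∈ P.E, (e ∈ P.T ↔ f e ∈ Q.T)) ∧
    (∀ e ∈ P.E, Q.lab (f e) = P.lab e) ∧
    (∀ e₁ ∈ P.E, ∀ e₂ ∈ P.E, Q.lt (f e₁) (f e₂) → P.lt e₁ e₂) ∧
    (∀ e₁ ∈ P.E, ∀ e₂ ∈ P.E, P.evord e₁ e₂ → Q.evord (f e₁) (f e₂))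

/-- `f` is an isomorphism of ipomsets from `P` to `Q`. -/
def IsIso (P Q : Ipomset Λ) (f : ℕ → ℕ) : Prop :=
  Set.BijOn f ↑P.E ↑Q.E ∧
    (∀ e ∈ P.E, (e ∈ P.S ↔ f e ∈ Q.S)) ∧
    (∀ e ∈ P.E, (e ∈ P.T ↔ f e ∈ Q.T)) ∧
    (∀ e ∈ P.E, Q.lab (f e) = P.lab e) ∧
    (∀ e₁ ∈ P.E, ∀ e₂ ∈ P.E, (P.lt e₁ e₂ ↔ Q.lt (f e₁) (f e₂))) ∧
    (∀ e₁ ∈ P.E, ∀ e₂ ∈ P.E, (P.evord e₁ e₂ ↔ Q.evord (f e₁) (f e₂)))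

def Isomorphic (P Q : Ipomset Λ) : Prop := ∃ f, IsIso P Q f

end Ipomset

/-- Subsumption closure of a set of ipomsets. -/
def downc {Λ : Type} (L : Set (Ipomset Λ)) : Set (Ipomset Λ) :=
  {P | ∃ Q ∈ L, P.Subsumes Q}

/-! ## Gluing composition -/

/-- The base relation whose transitive closure is the precedence of a gluing `P * Q`. -/
def glueBase {Λ : Type} (P Q : Ipomset Λ) : ℕ → ℕ → Prop := fun a b =>
  P.lt a b ∨ Q.lt a b ∨ (a ∈ P.E ∧ a ∉ P.T ∧ b ∈ Q.E ∧ b ∉ Q.S)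

/-- `IsGluing P Q R` : the gluing `P * Q` is defined and equals `R`
(events of the target interface of `P` are literally identified with those of the
source interface of `Q`). -/
structure IsGluing {Λ : Type} (P Q R : Ipomset Λ) : Prop where
  match_TS : P.T = Q.S
  inter : ∀ e, e ∈ P.E → e ∈ Q.E → e ∈ P.T
  evord_agree : ∀ a ∈ P.T, ∀ b ∈ P.T, (P.evord a b ↔ Q.evord a b)
  lab_agree : ∀ e ∈ P.T, P.lab e = Q.lab e
  E_eq : R.E = P.E ∪ Q.E
  S_eq : R.S = P.S
  T_eq : R.T = Q.T
  lab_P : ∀ e ∈ P.E, R.lab e = P.lab e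
  lab_Q : ∀ e ∈ Q.E, R.lab e = Q.lab e
  evord_eq : ∀ a b, (R.evord a b ↔ P.evord a b ∨ Q.evord a b)
  lt_eq : ∀ a b, (R.lt a b ↔ Relation.TransGen (glueBase P Q) a b)

/-- `IsGluingList [P₁, …, Pₙ] P` : the iterated gluing `P₁ * ⋯ * Pₙ` is defined and equals `P`. -/
inductive IsGluingList {Λ : Type} : List (Ipomset Λ) → Ipomset Λ → Prop
  | single (P : Ipomset Λ) : IsGluingList [P] P
  | cons {P Q R : Ipomset Λ} {l : List (Ipomset Λ)} :
      IsGluingList l Q → IsGluing P Q R → IsGluingList (P :: l) R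

/-! ## Step decompositions -/

/-- A step decomposition of `P`: a presentation of `P` as a gluing of starters and
terminators. -/
def IsStepDecomp {Λ : Type} (l : List (Ipomset Λ)) (P : Ipomset Λ) : Prop :=
  l ≠ [] ∧ (∀ Q ∈ l, Q.IsStarter ∨ Q.IsTerminator) ∧ IsGluingList l P

/-- Starters and terminators alternate along the list. -/
def Alternating {Λ : Type} (l : List (Ipomset Λ)) : Prop :=
  List.Chain'
    (fun A B => ¬(A.IsStarter ∧ B.IsStarter) ∧ ¬(A.IsTerminator ∧ B.IsTerminator)) l

def IsSparseDecomp {Λ : Type} (l : List (Ipomset Λ)) (P : Ipomset Λ) : Prop :=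
  IsStepDecomp l P ∧ Alternating l

/-! ## Discrete steps as letters (for words over Ω) -/

/-- A letter denoting a starter (`isUp = true`) or terminator (`isUp = false`) with
conclist `U` (a list of labels, in event order) which starts/terminates the events at
the positions in `A`. -/
structure StepLetter (Λ : Type) : Type where
  U : List Λ
  A : Finset ℕ
  isUp : Bool

/-- The letter is well-formed (the started/terminated events are positions of `U`). -/
def ValidLetter {Λ : Type} (s : StepLetter Λ) : Prop := ∀ a ∈ s.A, a < s.U.length

/-- The letter is a well-formed element of `Ω_{≤ k}`. -/
def ValidLetterLe {Λ : Type} (k : ℕ) (s : StepLetter Λ) : Prop :=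
  ValidLetter s ∧ s.U.length ≤ k

/-- `g` enumerates the set `V` of events of `P` as the conclist `U` (in event order,
with matching labels). -/
def ConclistOf {Λ : Type} (P : Ipomset Λ) (V : Set ℕ) (U : List Λ) (g : ℕ → ℕ) : Prop :=
  Set.BijOn g (Set.Iio U.length) V ∧
    (∀ i : Fin U.length, P.lab (g i.1) = U.get i) ∧
    (∀ i j : ℕ, i < j → j < U.length → P.evord (g i) (g j))

/-- The discrete ipomset `D` realises the letter `s`. -/
def LetterMatches {Λ : Type} (s : StepLetter Λ) (D : Ipomset Λ) : Prop :=
  (if s.isUp then D.IsStarter else D.IsTerminator) ∧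
  ∃ g : ℕ → ℕ, ConclistOf D ↑D.E s.U g ∧
    ∀ i < s.U.length, (i ∈ s.A ↔ g i ∉ (if s.isUp then D.S else D.T))

/-- The word `w` of letters glues to the ipomset `P`. -/
def WordMatches {Λ : Type} (w : List (StepLetter Λ)) (P : Ipomset Λ) : Prop :=
  ∃ l : List (Ipomset Λ), List.Forall₂ LetterMatches w l ∧ IsGluingList l P

/-! ## Higher-dimensional automata -/

/-- Remove from the list `U` the entries at positions in `A`. -/
def removeIdx {Λ : Type} (U : List Λ) (A : Finset ℕ) : List Λ :=
  (List.range U.length).filterMap (fun i => if i ∈ A then none else U[i]?)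

/-- Positions of the elements of `A` after the elements at positions in `B` are removed. -/
def reindex (B A : Finset ℕ) : Finset ℕ :=
  A.image (fun a => a - (B.filter (· < a)).card)

/-- A higher-dimensional automaton: a finite precubical set (cells with conclists of
active events and lower/upper face maps, `face false` = δ⁰ and `face true` = δ¹)
with start and accept cells. -/
structure HDA (Λ : Type) : Type 1 where
  Cell : Type
  fin : Fintype Cell
  ev : Cell → List Λ
  face : Bool → Finset ℕ → Cell → Cell
  face_ev : ∀ ν A q, (∀ a ∈ A, a < (ev q).length) →
      ev (face ν A q) = removeIdx (ev q) A
  face_comm : ∀ ν μ A B q, (∀ a ∈ A, a < (ev q).length) → (∀ b ∈ B, b < (ev q).length) →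
      Disjoint A B →
      face ν (reindex B A) (face μ B q) = face μ (reindex A B) (face ν A q)
  start : Set Cell
  accept : Set Cell

namespace HDA

variable {Λ : Type}

/-- Paths in an HDA, together with the word of starter/terminator letters they induce
(a single cell contributes its identity letter; an upstep from `δ⁰_A(q)` to `q`
contributes the starter on `ev q` starting `A`; a downstep from `q` to `δ¹_A(q)`
contributes the terminator on `ev q` terminating `A`). -/
inductive Path (H : HDA Λ) : H.Cell → H.Cell → List (StepLetter Λ) → Prop
  | nil (q : H.Cell) : Path H q q [⟨H.ev q, ∅, true⟩]
  | up {p : H.Cell} {w : List (StepLetter Λ)} (r : H.Cell) (A : Finset ℕ)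
      (hA : ∀ a ∈ A, a < (H.ev r).length) :
      Path H r p w → Path H (H.face false A r) p (⟨H.ev r, A, true⟩ :: w)
  | down {p : H.Cell} {w : List (StepLetter Λ)} (q : H.Cell) (A : Finset ℕ)
      (hA : ∀ a ∈ A, a < (H.ev q).length) :
      Path H (H.face true A q) p w → Path H q p (⟨H.ev q, A, false⟩ :: w)

/-- The language of an HDA: all ipomsets arising as gluings of the words of letters of
accepting paths. -/
def Lang (H : HDA Λ) : Set (Ipomset Λ) :=
  {P | ∃ q p w, q ∈ H.start ∧ p ∈ H.accept ∧ Path H q p w ∧ WordMatches w P}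

/-- The dimension of an HDA. -/
noncomputable def dim (H : HDA Λ) : ℕ :=
  letI := H.fin
  Finset.univ.sup (fun q => (H.ev q).length)

/-- An upstep of an HDA: `(δ⁰_A(q), ↗A, q)`. -/
structure UpStep (H : HDA Λ) : Type where
  cell : H.Cell
  A : Finset ℕ
  valid : ∀ a ∈ A, a < (H.ev cell).length

def UpStep.src {H : HDA Λ} (u : H.UpStep) : H.Cell := H.face false u.A u.cell
def UpStep.tgt {H : HDA Λ} (u : H.UpStep) : H.Cell := u.cell

/-- A downstep of an HDA: `(q, ↘A, δ¹_A(q))`. -/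
structure DownStep (H : HDA Λ) : Type where
  cell : H.Cell
  A : Finset ℕ
  valid : ∀ a ∈ A, a < (H.ev cell).length

def DownStep.src {H : HDA Λ} (d : H.DownStep) : H.Cell := d.cell
def DownStep.tgt {H : HDA Λ} (d : H.DownStep) : H.Cell := H.face true d.A d.cell

end HDA

/-- A set of ipomsets is regular if it is the language of a finite HDA. -/
def Regular {Λ : Type} (L : Set (Ipomset Λ)) : Prop := ∃ H : HDA Λ, HDA.Lang H = L

/-! ## Rational languages -/

/-- Rational languages: generated from ∅, {id_∅} and discrete ipomsets by union,
gluing composition and Kleene plus, each operation followed by closure under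
subsumption. -/
inductive Rational {Λ : Type} : Set (Ipomset Λ) → Prop
  | empty : Rational ∅
  | emptyId : Rational {P : Ipomset Λ | P.E = ∅}
  | single (D : Ipomset Λ) (hD : D.Discrete) :
      Rational (downc {P | Ipomset.Isomorphic P D})
  | union {L₁ L₂ : Set (Ipomset Λ)} : Rational L₁ → Rational L₂ →
      Rational (downc (L₁ ∪ L₂))
  | glue {L₁ L₂ : Set (Ipomset Λ)} : Rational L₁ → Rational L₂ →
      Rational (downc {R | ∃ P ∈ L₁, ∃ Q ∈ L₂, IsGluing P Q R})
  | plus {L : Set (Ipomset Λ)} : Rational L →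
      Rational (downc {R | ∃ l : List (Ipomset Λ), l ≠ [] ∧ (∀ Q ∈ l, Q ∈ L) ∧ IsGluingList l R})

/-! ## MSO over ipomsets -/

/-- MSO formulas over the signature `{<, ⇝, (a)_{a ∈ Λ}, s, t}`; first- and second-order
variables are indexed by ℕ. -/
inductive MSO (Λ : Type) : Type
  | lt : ℕ → ℕ → MSO Λ
  | ev : ℕ → ℕ → MSO Λ
  | lab : Λ → ℕ → MSO Λ
  | src : ℕ → MSO Λ
  | tgt : ℕ → MSO Λ
  | mem : ℕ → ℕ → MSO Λ
  | not : MSO Λ → MSO Λ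
  | and : MSO Λ → MSO Λ → MSO Λ
  | exFO : ℕ → MSO Λ → MSO Λ
  | exSO : ℕ → MSO Λ → MSO Λ

namespace MSO

variable {Λ : Type}

/-- Satisfaction of an MSO formula in an ipomset, under first- and second-order
valuations. -/
def Sat (P : Ipomset Λ) : MSO Λ → (ℕ → ℕ) → (ℕ → Set ℕ) → Prop
  | .lt x y, ν, _ => P.lt (ν x) (ν y)
  | .ev x y, ν, _ => P.evord (ν x) (ν y)
  | .lab a x, ν, _ => ν x ∈ P.E ∧ P.lab (ν x) = a
  | .src x, ν, _ => ν x ∈ P.S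
  | .tgt x, ν, _ => ν x ∈ P.T
  | .mem x X, ν, μ => ν x ∈ μ X
  | .not φ, ν, μ => ¬ Sat P φ ν μ
  | .and φ ψ, ν, μ => Sat P φ ν μ ∧ Sat P ψ ν μ
  | .exFO x φ, ν, μ => ∃ e ∈ P.E, Sat P φ (Function.update ν x e) μ
  | .exSO X φ, ν, μ => ∃ A : Set ℕ, A ⊆ ↑P.E ∧ Sat P φ ν (Function.update μ X A)

/-- Free first-order variables. -/
def fv1 : MSO Λ → Finset ℕ
  | .lt x y => {x, y}
  | .ev x y => {x, y}
  | .lab _ x => {x}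
  | .src x => {x}
  | .tgt x => {x}
  | .mem x _ => {x}
  | .not φ => fv1 φ
  | .and φ ψ => fv1 φ ∪ fv1 ψ
  | .exFO x φ => fv1 φ \ {x}
  | .exSO _ φ => fv1 φ

/-- Free second-order variables. -/
def fv2 : MSO Λ → Finset ℕ
  | .mem _ X => {X}
  | .not φ => fv2 φ
  | .and φ ψ => fv2 φ ∪ fv2 ψ
  | .exFO _ φ => fv2 φ
  | .exSO X φ => fv2 φ \ {X}
  | _ => ∅

/-- A sentence: a formula with no free variables. -/
def Closed (φ : MSO Λ) : Prop := φ.fv1 = ∅ ∧ φ.fv2 = ∅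

/-- Satisfaction of a sentence. -/
def Models (P : Ipomset Λ) (φ : MSO Λ) : Prop :=
  Sat P φ (fun _ => 0) (fun _ => ∅)

end MSO

/-- A set of interval ipomsets is MSO-definable if it is the set of interval ipomsets
satisfying some MSO sentence. -/
def MSODefinable {Λ : Type} (L : Set (Ipomset Λ)) : Prop :=
  ∃ φ : MSO Λ, φ.Closed ∧ L = {P | P.Interval ∧ MSO.Models P φ}

/-! ## MSO over words -/

/-- MSO formulas over words on the alphabet `Γ`. -/
inductive WMSO (Γ : Type) : Type
  | letter : Γ → ℕ → WMSO Γ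
  | lt : ℕ → ℕ → WMSO Γ
  | mem : ℕ → ℕ → WMSO Γ
  | not : WMSO Γ → WMSO Γ
  | and : WMSO Γ → WMSO Γ → WMSO Γ
  | exFO : ℕ → WMSO Γ → WMSO Γ
  | exSO : ℕ → WMSO Γ → WMSO Γ

namespace WMSO

variable {Γ : Type}

/-- Satisfaction of a word MSO formula in a word `w : List Γ`. -/
def Sat (w : List Γ) : WMSO Γ → (ℕ → ℕ) → (ℕ → Set ℕ) → Prop
  | .letter a x, ν, _ => w[ν x]? = some a
  | .lt x y, ν, _ => ν x < ν y
  | .mem x X, ν, μ => ν x ∈ μ X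
  | .not φ, ν, μ => ¬ Sat w φ ν μ
  | .and φ ψ, ν, μ => Sat w φ ν μ ∧ Sat w ψ ν μ
  | .exFO x φ, ν, μ => ∃ i < w.length, Sat w φ (Function.update ν x i) μ
  | .exSO X φ, ν, μ => ∃ A : Set ℕ, A ⊆ Set.Iio w.length ∧ Sat w φ ν (Function.update μ X A)

def fv1 : WMSO Γ → Finset ℕ
  | .letter _ x => {x}
  | .lt x y => {x, y}
  | .mem x _ => {x}
  | .not φ => fv1 φ
  | .and φ ψ => fv1 φ ∪ fv1 ψ
  | .exFO x φ => fv1 φ \ {x}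
  | .exSO _ φ => fv1 φ

def fv2 : WMSO Γ → Finset ℕ
  | .mem _ X => {X}
  | .not φ => fv2 φ
  | .and φ ψ => fv2 φ ∪ fv2 ψ
  | .exFO _ φ => fv2 φ
  | .exSO X φ => fv2 φ \ {X}
  | _ => ∅

def Closed (φ : WMSO Γ) : Prop := φ.fv1 = ∅ ∧ φ.fv2 = ∅

def Models (w : List Γ) (φ : WMSO Γ) : Prop :=
  Sat w φ (fun _ => 0) (fun _ => ∅)

end WMSO

/-! ## Step indices in a step decomposition -/

/-- The (1-indexed) step at which event `e` is started in the decomposition `l` of `P`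
(`⊥ = −∞` for source events). -/
noncomputable def StIdx {Λ : Type} (P : Ipomset Λ) (l : List (Ipomset Λ)) (e : ℕ) : EReal :=
  if e ∈ P.S then ⊥
  else sInf {x : EReal | ∃ ℓ : Fin l.length, e ∈ (l.get ℓ).E ∧ x = ((ℓ : ℕ) : EReal) + 1}

/-- The (1-indexed) step at which event `e` is terminated in the decomposition `l` of `P`
(`⊤ = +∞` for target events). -/
noncomputable def TeIdx {Λ : Type} (P : Ipomset Λ) (l : List (Ipomset Λ)) (e : ℕ) : EReal :=
  if e ∈ P.T then ⊤
  else sSup {x : EReal | ∃ ℓ : Fin l.length, e ∈ (l.get ℓ).E ∧ x = ((ℓ : ℕ) : EReal) + 1}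

/-- Select `St` (`true`) or `Te` (`false`). -/
noncomputable def selIdx {Λ : Type} (P : Ipomset Λ) (l : List (Ipomset Λ)) (f : Bool)
    (e : ℕ) : EReal :=
  if f then StIdx P l e else TeIdx P l e


/-! ## Auxiliary lemmas for Statement 14 -/

section Aux

variable {Λ : Type}

/-- Occurrence set of an event in a list of ipomsets. -/
def OccIdx (l : List (Ipomset Λ)) (e : ℕ) : Set ℕ :=
  {i | ∃ h : i < l.length, e ∈ (l.get ⟨i, h⟩).E}

lemma occIdx_cons_zero {P : Ipomset Λ} {l : List (Ipomset Λ)} {e : ℕ} :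
    0 ∈ OccIdx (P :: l) e ↔ e ∈ P.E := by
  constructor
  · rintro ⟨h, he⟩; exact he
  · intro he; exact ⟨Nat.succ_pos _, he⟩

lemma occIdx_cons_succ {P : Ipomset Λ} {l : List (Ipomset Λ)} {e i : ℕ} :
    (i + 1) ∈ OccIdx (P :: l) e ↔ i ∈ OccIdx l e := by
  constructor
  · rintro ⟨h, he⟩; exact ⟨Nat.lt_of_succ_lt_succ h, he⟩
  · rintro ⟨h, he⟩; exact ⟨Nat.succ_lt_succ h, he⟩

lemma IsGluingList.mem_E_iff {l : List (Ipomset Λ)} {R : Ipomset Λ}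
    (h : IsGluingList l R) (e : ℕ) : e ∈ R.E ↔ ∃ i, i ∈ OccIdx l e := by
  induction h with
  | single P =>
    constructor
    · intro he; exact ⟨0, Nat.one_pos, he⟩
    · rintro ⟨i, hi, he⟩
      obtain rfl : i = 0 := Nat.lt_one_iff.mp hi
      exact he
  | @cons P Q R' l' hrest hglue ih =>
    rw [hglue.E_eq]
    simp only [Finset.mem_union]
    constructor
    · rintro (he | he)
      · exact ⟨0, occIdx_cons_zero.mpr he⟩
      · obtain ⟨i, hi⟩ := ih.mp he
        exact ⟨i + 1, occIdx_cons_succ.mpr hi⟩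
    · rintro ⟨i, hi⟩
      cases i with
      | zero => exact Or.inl (occIdx_cons_zero.mp hi)
      | succ i => exact Or.inr (ih.mpr ⟨i, occIdx_cons_succ.mp hi⟩)

lemma IsGluingList.S_first {l : List (Ipomset Λ)} {R : Ipomset Λ}
    (h : IsGluingList l R) : ∀ e ∈ R.S, 0 ∈ OccIdx l e := by
  induction h with
  | single P =>
    intro e he
    exact occIdx_cons_zero.mpr (P.S_sub he)
  | @cons P Q R' l' hrest hglue ih =>
    intro e he
    rw [hglue.S_eq] at he
    exact occIdx_cons_zero.mpr (P.S_sub he)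

lemma glue_chain {P Q R : Ipomset Λ} (hg : IsGluing P Q R) (hPd : P.Discrete)
    {x y : ℕ} (h : Relation.TransGen (glueBase P Q) x y) :
    Q.lt x y ∨ (x ∈ P.E ∧ x ∉ P.T ∧ y ∈ Q.E ∧ y ∉ Q.S) := by
  induction h with
  | single hstep =>
    rcases hstep with h | h | h
    · exact absurd h (hPd _ _)
    · exact Or.inl h
    · exact Or.inr h
  | @tail b c hxb hbc ih =>
    have hbQ : b ∈ Q.E ∧ b ∉ Q.S := by
      rcases ih with h | ⟨_, _, h1, h2⟩
      · exact ⟨(Q.lt_dom _ _ h).2, fun hs => Q.S_min _ hs _ h⟩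
      · exact ⟨h1, h2⟩
    have hbc' : Q.lt b c := by
      rcases hbc with h | h | ⟨h1, h2, _, _⟩
      · exact absurd h (hPd _ _)
      · exact h
      · exact absurd (hg.inter _ h1 hbQ.1) h2
    rcases ih with h | ⟨h1, h2, _, _⟩
    · exact Or.inl (Q.lt_trans _ _ _ h hbc')
    · exact Or.inr ⟨h1, h2, (Q.lt_dom _ _ hbc').2, fun hs => Q.S_min _ hs _ hbc'⟩

lemma key_lt_iff {l : List (Ipomset Λ)} {R : Ipomset Λ} (hgl : IsGluingList l R) :
    (∀ B ∈ l, B.Discrete) → ∀ x y, x ∈ R.E → y ∈ R.E → x ∉ R.T → y ∉ R.S →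
    (R.lt x y ↔ ∀ i ∈ OccIdx l x, ∀ j ∈ OccIdx l y, i < j) := by
  induction hgl with
  | single P =>
    intro hd x y hx hy hxT hyS
    have hnl : ¬ P.lt x y := hd P (by simp) _ _
    simp only [hnl, false_iff]
    intro h
    exact absurd (h 0 (occIdx_cons_zero.mpr hx) 0 (occIdx_cons_zero.mpr hy))
      (lt_irrefl 0)
  | @cons P Q R' l' hrest hglue ih =>
    intro hd x y hx hy hxT hyS
    have hPd : P.Discrete := hd P List.mem_cons_self
    have hd' : ∀ B ∈ l', B.Discrete := fun B hB => hd B (List.mem_cons_of_mem _ hB)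
    have hTQ : R'.T = Q.T := hglue.T_eq
    have hQE : ∀ e, e ∈ Q.E ↔ ∃ i, i ∈ OccIdx l' e := hrest.mem_E_iff
    constructor
    · intro hlt
      have hTG := (hglue.lt_eq x y).mp hlt
      rcases glue_chain hglue hPd hTG with hQ | ⟨hxP, hxPT, hyQ, hyQS⟩
      · -- the whole chain lies in Q
        have hxQ := (Q.lt_dom _ _ hQ).1
        have hyQ := (Q.lt_dom _ _ hQ).2
        have hyQS : y ∉ Q.S := fun hs => Q.S_min _ hs _ hQ
        have hxQT : x ∉ Q.T := hTQ ▸ hxT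
        have hIH := (ih hd' x y hxQ hyQ hxQT hyQS).mp hQ
        have hyP : y ∉ P.E := fun hyP =>
          hyQS (hglue.match_TS ▸ hglue.inter _ hyP hyQ)
        intro i hi j hj
        cases j with
        | zero => exact absurd (occIdx_cons_zero.mp hj) hyP
        | succ j =>
          cases i with
          | zero => exact Nat.succ_pos _
          | succ i =>
            exact Nat.succ_lt_succ
              (hIH i (occIdx_cons_succ.mp hi) j (occIdx_cons_succ.mp hj))
      · -- a cross step
        have hxQ : x ∉ Q.E := fun h => hxPT (hglue.inter _ hxP h)
        have hyP : y ∉ P.E := fun h =>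
          hyQS (hglue.match_TS ▸ hglue.inter _ h hyQ)
        intro i hi j hj
        cases i with
        | succ i => exact absurd ((hQE x).mpr ⟨i, occIdx_cons_succ.mp hi⟩) hxQ
        | zero =>
          cases j with
          | zero => exact absurd (occIdx_cons_zero.mp hj) hyP
          | succ j => exact Nat.succ_pos _
    · intro H
      rw [hglue.lt_eq]
      have hxE : x ∈ P.E ∨ x ∈ Q.E := Finset.mem_union.mp (hglue.E_eq ▸ hx)
      have hyE : y ∈ P.E ∨ y ∈ Q.E := Finset.mem_union.mp (hglue.E_eq ▸ hy)
      have hxQT : x ∉ Q.T := hTQ ▸ hxT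
      by_cases hxP : x ∈ P.E
      · by_cases hxQ : x ∈ Q.E
        · -- x in both, hence x ∈ Q.S, it occurs at index 1
          have hxQS : x ∈ Q.S := hglue.match_TS ▸ hglue.inter _ hxP hxQ
          have hx1 : (0 + 1) ∈ OccIdx (P :: l') x :=
            occIdx_cons_succ.mpr (hrest.S_first _ hxQS)
          have hyP : y ∉ P.E := fun hyP => by
            have := H 1 hx1 0 (occIdx_cons_zero.mpr hyP)
            omega
          have hyQ : y ∈ Q.E := hyE.resolve_left hyP
          have hyQS : y ∉ Q.S := fun hs => by
            have := H 1 hx1 1 (occIdx_cons_succ.mpr (hrest.S_first _ hs))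
            omega
          have hQlt : Q.lt x y := by
            rw [ih hd' x y hxQ hyQ hxQT hyQS]
            intro i hi j hj
            have := H (i + 1) (occIdx_cons_succ.mpr hi) (j + 1) (occIdx_cons_succ.mpr hj)
            omega
          exact Relation.TransGen.single (Or.inr (Or.inl hQlt))
        · -- x only in P: cross step
          have hxPT : x ∉ P.T := fun hs => hxQ (Q.S_sub (hglue.match_TS ▸ hs))
          have hyP : y ∉ P.E := fun hyP => by
            have := H 0 (occIdx_cons_zero.mpr hxP) 0 (occIdx_cons_zero.mpr hyP)
            omega
          have hyQ : y ∈ Q.E := hyE.resolve_left hyP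
          have hyQS : y ∉ Q.S := fun hs => hyP (P.T_sub (hglue.match_TS ▸ hs))
          exact Relation.TransGen.single (Or.inr (Or.inr ⟨hxP, hxPT, hyQ, hyQS⟩))
      · -- x only in Q
        have hxQ : x ∈ Q.E := hxE.resolve_left hxP
        obtain ⟨i0, hi0⟩ := (hQE x).mp hxQ
        have hxi : (i0 + 1) ∈ OccIdx (P :: l') x := occIdx_cons_succ.mpr hi0
        have hyP : y ∉ P.E := fun hyP => by
          have := H (i0 + 1) hxi 0 (occIdx_cons_zero.mpr hyP)
          omega
        have hyQ : y ∈ Q.E := hyE.resolve_left hyP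
        have hyQS : y ∉ Q.S := fun hs => by
          have := H (i0 + 1) hxi 1 (occIdx_cons_succ.mpr (hrest.S_first _ hs))
          omega
        have hQlt : Q.lt x y := by
          rw [ih hd' x y hxQ hyQ hxQT hyQS]
          intro i hi j hj
          have := H (i + 1) (occIdx_cons_succ.mpr hi) (j + 1) (occIdx_cons_succ.mpr hj)
          omega
        exact Relation.TransGen.single (Or.inr (Or.inl hQlt))

lemma sSup_lt_sInf_iff_forall {A B : Set EReal} (hA : A.Nonempty) (hB : B.Nonempty)
    (hAf : A.Finite) (hBf : B.Finite) :
    sSup A < sInf B ↔ ∀ a ∈ A, ∀ b ∈ B, a < b := by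
  constructor
  · intro h a ha b hb
    exact lt_of_le_of_lt (le_sSup ha) (lt_of_lt_of_le h (sInf_le hb))
  · intro h
    exact h _ (hA.csSup_mem hAf) _ (hB.csInf_mem hBf)

lemma mem_idxSet_iff {l : List (Ipomset Λ)} {e : ℕ} (v : EReal) :
    (v ∈ {x : EReal | ∃ ℓ : Fin l.length, e ∈ (l.get ℓ).E ∧ x = ((ℓ : ℕ) : EReal) + 1})
      ↔ ∃ i ∈ OccIdx l e, v = ((i : ℕ) : EReal) + 1 := by
  constructor
  · rintro ⟨ℓ, he, rfl⟩
    exact ⟨ℓ.1, ⟨ℓ.2, he⟩, rfl⟩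
  · rintro ⟨i, ⟨hi, he⟩, rfl⟩
    exact ⟨⟨i, hi⟩, he, rfl⟩

lemma idxSet_finite {l : List (Ipomset Λ)} {e : ℕ} :
    {x : EReal | ∃ ℓ : Fin l.length, e ∈ (l.get ℓ).E ∧ x = ((ℓ : ℕ) : EReal) + 1}.Finite := by
  apply Set.Finite.subset (Set.finite_range (fun ℓ : Fin l.length => ((ℓ : ℕ) : EReal) + 1))
  rintro v ⟨ℓ, _, rfl⟩
  exact ⟨ℓ, rfl⟩

end Aux

/-- In the sparse step decomposition of an interval ipomset,
`Te(x) < St(y)` if and only if `x < y` in the precedence order. -/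
theorem te_lt_st_iff_precedence {Λ : Type} (P : Ipomset Λ) (hP : P.Interval)
    (l : List (Ipomset Λ)) (hl : IsSparseDecomp l P) :
    ∀ x ∈ P.E, ∀ y ∈ P.E, (TeIdx P l x < StIdx P l y ↔ P.lt x y) := by
  obtain ⟨⟨hne, hsteps, hgl⟩, halt⟩ := hl
  have hd : ∀ B ∈ l, B.Discrete := fun B hB => (hsteps B hB).elim (fun h => h.1) (fun h => h.1)
  intro x hx y hy
  by_cases hxT : x ∈ P.T
  · rw [TeIdx, if_pos hxT]
    constructor
    · intro h; exact absurd h not_top_lt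
    · intro h; exact absurd h (P.T_max x hxT y)
  by_cases hyS : y ∈ P.S
  · rw [StIdx, if_pos hyS]
    constructor
    · intro h; exact absurd h not_lt_bot
    · intro h; exact absurd h (P.S_min y hyS x)
  rw [TeIdx, if_neg hxT, StIdx, if_neg hyS]
  have hAne : {v : EReal | ∃ ℓ : Fin l.length, x ∈ (l.get ℓ).E ∧ v = ((ℓ : ℕ) : EReal) + 1}.Nonempty := by
    obtain ⟨i, hi⟩ := (hgl.mem_E_iff x).mp hx
    exact ⟨((i : ℕ) : EReal) + 1, (mem_idxSet_iff _).mpr ⟨i, hi, rfl⟩⟩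
  have hBne : {v : EReal | ∃ ℓ : Fin l.length, y ∈ (l.get ℓ).E ∧ v = ((ℓ : ℕ) : EReal) + 1}.Nonempty := by
    obtain ⟨j, hj⟩ := (hgl.mem_E_iff y).mp hy
    exact ⟨((j : ℕ) : EReal) + 1, (mem_idxSet_iff _).mpr ⟨j, hj, rfl⟩⟩
  rw [sSup_lt_sInf_iff_forall hAne hBne idxSet_finite idxSet_finite,
    key_lt_iff hgl hd x y hx hy hxT hyS]
  constructor
  · intro H i hi j hj
    have h1 := H _ ((mem_idxSet_iff _).mpr ⟨i, hi, rfl⟩) _ ((mem_idxSet_iff _).mpr ⟨j, hj, rfl⟩)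
    have h2 : i + 1 < j + 1 := by exact_mod_cast h1
    omega
  · intro H a ha b hb
    obtain ⟨i, hi, rfl⟩ := (mem_idxSet_iff _).mp ha
    obtain ⟨j, hj, rfl⟩ := (mem_idxSet_iff _).mp hb
    have h1 : i + 1 < j + 1 := Nat.succ_lt_succ (H i hi j hj)
    exact_mod_cast h1
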